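/- Suppose C = (c_1,…,c_n) is a nonzero vector in ℂ^n with f_i(C) + c_i = 0 for all i, the Kovalevskaya matrix K_{ij} = (∂f_i/∂x_j)(C) + δ_{ij} is diagonalizable with eigenvalues ρ_1 = -1, ρ_2, …, ρ_n, and the system possesses a nonzero homogeneous polynomial first integral F_M of degree M ≥ 1 (i.e., Σ_{i=1}^n f_i ∂F_M/∂x_i = 0). Then there exist nonnegative integers k_2,…,k_n such that k_2ρ_2 + ⋯ + k_nρ_n = M and k_2 + ⋯ + k_n ≤ M. -/

import Mathlib

open MvPolynomial

namespace TsyAux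

variable {n : ℕ}

lemma coeff_pderiv' (i : Fin n) (P : MvPolynomial (Fin n) ℂ) (k : Fin n →₀ ℕ) :
    coeff k (pderiv i P) = ((k i : ℂ) + 1) * coeff (k + Finsupp.single i 1) P := by
  induction P using MvPolynomial.induction_on' with
  | monomial u a =>
    rw [pderiv_monomial, coeff_monomial, coeff_monomial]
    by_cases h : u = k + Finsupp.single i 1
    · subst h
      rw [if_pos, if_pos rfl]
      · push_cast [Finsupp.add_apply, Finsupp.single_apply]
        simp
        ring
      · ext j
        simp [Finsupp.tsub_apply, Finsupp.add_apply, Finsupp.single_apply]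
    · rw [if_neg h]
      by_cases h2 : u - Finsupp.single i 1 = k
      · rw [if_pos h2]
        have hui : u i = 0 := by
          by_contra hui
          apply h
          rw [← h2, tsub_add_cancel_of_le]
          rwa [Finsupp.single_le_iff, Nat.one_le_iff_ne_zero]
        simp [hui]
      · rw [if_neg h2, mul_zero]
  | add p q hp hq => simp [hp, hq, mul_add]

lemma coeff_X_mul_pderiv (i : Fin n) (P : MvPolynomial (Fin n) ℂ) (k : Fin n →₀ ℕ) :
    coeff k (X i * pderiv i P) = (k i : ℂ) * coeff k P := by
  rw [mul_comm, coeff_mul_X']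
  by_cases h : i ∈ k.support
  · rw [if_pos h, coeff_pderiv']
    have hk : 1 ≤ k i := by
      rw [Finsupp.mem_support_iff] at h; omega
    have h1 : (k - Finsupp.single i 1) + Finsupp.single i 1 = k := by
      rw [tsub_add_cancel_of_le]
      rwa [Finsupp.single_le_iff]
    rw [h1]
    congr 1
    rw [Finsupp.tsub_apply, Finsupp.single_apply, if_pos rfl]
    rw [Nat.cast_sub hk]
    push_cast
    ring
  · rw [if_neg h]
    rw [Finsupp.notMem_support_iff] at h
    simp [h]

lemma pderiv_aeval_eq (g : Fin n → MvPolynomial (Fin n) ℂ) (m : Fin n)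
    (P : MvPolynomial (Fin n) ℂ) :
    pderiv m (aeval g P) = ∑ i, aeval g (pderiv i P) * pderiv m (g i) := by
  induction P using MvPolynomial.induction_on with
  | C a => simp
  | add p q hp hq =>
    rw [map_add (aeval (R := ℂ) g), map_add (pderiv m), hp, hq, ← Finset.sum_add_distrib]
    refine Finset.sum_congr rfl fun i _ => ?_
    rw [map_add (pderiv i), map_add (aeval (R := ℂ) g), add_mul]
  | mul_X p j hp =>
    rw [map_mul, aeval_X, pderiv_mul, hp]
    have : ∀ i : Fin n, aeval (R := ℂ) g (pderiv i (p * X j)) * pderiv m (g i)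
        = aeval (R := ℂ) g (pderiv i p) * pderiv m (g i) * g j
          + aeval (R := ℂ) g (p * Pi.single (M := fun _ => MvPolynomial (Fin n) ℂ) i 1 j) * pderiv m (g i) := by
      intro i
      rw [pderiv_mul, pderiv_X, map_add (aeval (R := ℂ) g), add_mul, map_mul, aeval_X]
      ring
    rw [Finset.sum_congr rfl fun i _ => this i, Finset.sum_add_distrib, ← Finset.sum_mul]
    congr 1
    rw [Finset.sum_eq_single j]
    · simp
    · intro i _ hij
      rw [Pi.single_eq_of_ne (Ne.symm hij), mul_zero, map_zero, zero_mul]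
    · simp

lemma ndeg_eq (k : Fin n →₀ ℕ) : Finsupp.degree k = ∑ m, k m := by
  rw [Finsupp.degree]
  exact Finset.sum_subset (Finset.subset_univ _)
    (fun x _ hx => Finsupp.notMem_support_iff.mp hx)

lemma euler {M : ℕ} {F : MvPolynomial (Fin n) ℂ} (hF : F.IsHomogeneous M) :
    ∑ i, X i * pderiv i F = C (M : ℂ) * F := by
  apply MvPolynomial.ext
  intro k
  rw [coeff_C_mul]
  rw [MvPolynomial.coeff_sum]
  simp_rw [coeff_X_mul_pderiv]
  rw [← Finset.sum_mul]
  by_cases h : coeff k F = 0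
  · rw [h, mul_zero, mul_zero]
  · congr 1
    have := hF h
    rw [show (Finsupp.weight 1 : (Fin n →₀ ℕ) →+ ℕ) = Finsupp.degree from
      (Finsupp.degree_eq_weight_one (R := ℕ)).symm] at this
    rw [ndeg_eq] at this
    rw [← this]
    push_cast
    rfl

lemma eval_aeval' (z : Fin n → ℂ) (g : Fin n → MvPolynomial (Fin n) ℂ)
    (P : MvPolynomial (Fin n) ℂ) :
    eval z (aeval g P) = eval (fun i => eval z (g i)) P := by
  rw [map_aeval]
  have h : (eval z).comp (algebraMap ℂ (MvPolynomial (Fin n) ℂ)) = RingHom.id ℂ :=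
    RingHom.ext fun r => by simp [MvPolynomial.algebraMap_eq]
  rw [h]
  rfl

set_option maxHeartbeats 1000000 in
lemma core (hn : 0 < n)
    (f : Fin n → MvPolynomial (Fin n) ℂ)
    (hfhom : ∀ i, (f i).IsHomogeneous 2)
    (c : Fin n → ℂ)
    (hC : ∀ i, eval c (f i) + c i = 0)
    (K : Matrix (Fin n) (Fin n) ℂ)
    (hK : ∀ i j, K i j = eval c (pderiv j (f i)) + if i = j then 1 else 0)
    (hTaylor : ∀ i (u v : Fin n → ℂ), eval (fun p => u p + v p) (f i)
       = eval u (f i) + (∑ j, eval u (pderiv j (f i)) * v j) + eval v (f i))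
    (ρ : Fin n → ℂ)
    (L' : Matrix (Fin n) (Fin n) ℂ) (hL' : IsUnit L'.det)
    (hdiag' : K * L' = L' * Matrix.diagonal ρ)
    (hcol : ∀ i, L' i ⟨0, hn⟩ = c i)
    (M : ℕ) (hM : 1 ≤ M)
    (F : MvPolynomial (Fin n) ℂ) (hF0 : F ≠ 0) (hFhom : F.IsHomogeneous M)
    (hFint : ∑ i, f i * pderiv i F = 0) :
    ∃ k : Fin n → ℕ, k ⟨0, hn⟩ = 0 ∧ (∑ i, (k i : ℂ) * ρ i) = (M : ℂ)
      ∧ (∑ i, k i) ≤ M := by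
  set i0 : Fin n := ⟨0, hn⟩ with hi0
  set B : Matrix (Fin n) (Fin n) ℂ := L'⁻¹ with hBdef
  have hB1 : L' * B = 1 := Matrix.mul_nonsing_inv _ hL'
  -- generators of the affine substitution x = c + L'z
  set gens : Fin n → MvPolynomial (Fin n) ℂ :=
    fun i => C (c i) + ∑ j, C (L' i j) * X j with hgensdef
  set G : MvPolynomial (Fin n) ℂ := aeval gens F with hGdef
  -- linear part generators
  set lingens : Fin n → MvPolynomial (Fin n) ℂ :=
    fun i => ∑ j, C (L' i j) * X j with hlingensdef
  have hlin1 : ∀ i, (lingens i).IsHomogeneous 1 :=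
    fun i => IsHomogeneous.sum _ _ _ fun j _ => isHomogeneous_C_mul_X _ _
  set f0 : Fin n → MvPolynomial (Fin n) ℂ := fun i => aeval lingens (f i) with hf0def
  have hf0hom : ∀ i, (f0 i).IsHomogeneous 2 := fun i => by
    simpa [hf0def] using MvPolynomial.IsHomogeneous.aeval (hfhom i) lingens hlin1
  set q : Fin n → MvPolynomial (Fin n) ℂ :=
    fun m => ∑ i, C (B m i) * f0 i with hqdef
  have hqhom : ∀ m, (q m).IsHomogeneous 2 :=
    fun m => IsHomogeneous.sum _ _ _ fun i _ => (hf0hom i).C_mul _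
  -- G is nonzero
  have hGne : G ≠ 0 := by
    set ψgens : Fin n → MvPolynomial (Fin n) ℂ :=
      fun i => ∑ j, C (B i j) * (X j - C (c j)) with hψdef
    have hψz : ∀ (z : Fin n → ℂ) p, eval z (ψgens p) = B.mulVec (fun j => z j - c j) p := by
      intro z p
      rw [hψdef]
      simp [Matrix.mulVec, dotProduct]
    have hgen : (fun i => aeval ψgens (gens i)) = X := by
      funext i
      apply MvPolynomial.funext
      intro z
      rw [eval_aeval']
      rw [hgensdef]
      simp only [map_add, eval_C, map_sum, eval_mul, eval_X]
      calc c i + ∑ j, L' i j * eval z (ψgens j)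
          = c i + ∑ j, L' i j * B.mulVec (fun j => z j - c j) j := by
            rw [Finset.sum_congr rfl fun j _ => by rw [hψz]]
        _ = c i + (L' * B).mulVec (fun j => z j - c j) i := by
            rw [← Matrix.mulVec_mulVec]
            rfl
        _ = z i := by rw [hB1, Matrix.one_mulVec]; ring
    intro h
    apply hF0
    have : aeval ψgens G = F := by
      rw [hGdef, comp_aeval_apply, hgen, aeval_X_left_apply]
    rw [← this, h, map_zero]
  -- derivative of generators
  have pdgens : ∀ i m, pderiv m (gens i) = C (L' i m) := by
    intro i m
    rw [hgensdef]
    simp only [map_add, pderiv_C, zero_add, map_sum, pderiv_C_mul]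
    rw [Finset.sum_eq_single m]
    · rw [pderiv_X, Pi.single_eq_same, mul_one]
    · intro j _ hjm
      rw [pderiv_X, Pi.single_eq_of_ne hjm, mul_zero]
    · intro h
      exact absurd (Finset.mem_univ m) h
  have pdG : ∀ m, pderiv m G = ∑ i, aeval gens (pderiv i F) * C (L' i m) := by
    intro m
    rw [hGdef, pderiv_aeval_eq]
    exact Finset.sum_congr rfl fun i _ => by rw [pdgens]
  -- the key Taylor-expansion identity
  have hkey : ∀ i, (∑ m, C (L' i m) * (C (ρ m) * X m + q m))
      = aeval gens (f i) + gens i := by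
    intro i
    apply MvPolynomial.funext
    intro z
    set u : Fin n → ℂ := L'.mulVec z with hudef
    have humv : ∀ p, u p = ∑ j, L' p j * z j := by
      intro p; rw [hudef]; simp [Matrix.mulVec, dotProduct]
    have hqz : ∀ m, eval z (q m) = ∑ i', B m i' * eval u (f i') := by
      intro m
      rw [hqdef]
      simp only [map_sum, eval_mul, eval_C]
      refine Finset.sum_congr rfl fun i' _ => ?_
      congr 1
      rw [hf0def, eval_aeval']
      have : (fun p => eval z (lingens p)) = u := by
        funext p
        rw [hlingensdef, humv]
        simp
      rw [this]
    have h1 : ∑ m, L' i m * (ρ m * z m) = (∑ j, eval c (pderiv j (f i)) * u j) + u i := by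
      have e1 : ∑ m, L' i m * (ρ m * z m) = ((L' * Matrix.diagonal ρ).mulVec z) i := by
        simp only [Matrix.mulVec, dotProduct, Matrix.mul_diagonal]
        exact Finset.sum_congr rfl fun m _ => by ring
      rw [e1, ← hdiag', ← Matrix.mulVec_mulVec, ← hudef]
      have e2 : K.mulVec u i = ∑ j, K i j * u j := by
        simp [Matrix.mulVec, dotProduct]
      rw [e2, Finset.sum_congr rfl fun j _ => by rw [hK i j, add_mul], Finset.sum_add_distrib]
      congr 1
      rw [Finset.sum_congr rfl fun j (_ : j ∈ Finset.univ) =>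
        (by rw [ite_mul, one_mul, zero_mul] :
          (if i = j then (1:ℂ) else 0) * u j = if i = j then u j else 0)]
      simp
    have h2 : ∑ m, L' i m * eval z (q m) = eval u (f i) := by
      rw [Finset.sum_congr rfl fun m (_ : m ∈ Finset.univ) => by rw [hqz]]
      rw [Finset.sum_congr rfl fun m (_ : m ∈ Finset.univ) => Finset.mul_sum _ _ (L' i m)]
      rw [Finset.sum_comm]
      have e3 : ∀ i', ∑ m, L' i m * (B m i' * eval u (f i'))
          = ((L' * B) i i') * eval u (f i') := by
        intro i'
        rw [Matrix.mul_apply, Finset.sum_mul]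
        exact Finset.sum_congr rfl fun m _ => by ring
      rw [Finset.sum_congr rfl fun i' (_ : i' ∈ Finset.univ) => e3 i', hB1]
      rw [Finset.sum_eq_single i]
      · rw [Matrix.one_apply_eq, one_mul]
      · intro i' _ hii
        rw [Matrix.one_apply_ne (Ne.symm hii), zero_mul]
      · intro h; exact absurd (Finset.mem_univ i) h
    have hgz : ∀ p, eval z (gens p) = c p + u p := by
      intro p
      rw [hgensdef, humv]
      simp
    have LHSeq : eval z (∑ m, C (L' i m) * (C (ρ m) * X m + q m))
        = (∑ m, L' i m * (ρ m * z m)) + ∑ m, L' i m * eval z (q m) := by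
      simp only [map_sum, eval_mul, eval_add, eval_C, eval_X]
      rw [← Finset.sum_add_distrib]
      exact Finset.sum_congr rfl fun m _ => by ring
    have RHSeq : eval z (aeval gens (f i) + gens i)
        = eval (fun p => c p + u p) (f i) + (c i + u i) := by
      rw [eval_add, eval_aeval']
      have : (fun p => eval z (gens p)) = fun p => c p + u p := by
        funext p; exact hgz p
      rw [this, hgz i]
    rw [LHSeq, RHSeq, h1, h2, hTaylor i c u]
    linear_combination -hC i
  -- identity 1: eigen-equation for the transformed derivation
  have hId1 : ∑ m, (C (ρ m) * X m + q m) * pderiv m G = C (M : ℂ) * G := by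
    calc ∑ m, (C (ρ m) * X m + q m) * pderiv m G
        = ∑ m, ∑ i, (C (ρ m) * X m + q m) * (aeval gens (pderiv i F) * C (L' i m)) := by
          refine Finset.sum_congr rfl fun m _ => ?_
          rw [pdG m, Finset.mul_sum]
      _ = ∑ i, ∑ m, aeval gens (pderiv i F) * (C (L' i m) * (C (ρ m) * X m + q m)) := by
          rw [Finset.sum_comm]
          exact Finset.sum_congr rfl fun i _ => Finset.sum_congr rfl fun m _ => by ring
      _ = ∑ i, aeval gens (pderiv i F) * (aeval gens (f i) + gens i) := by
          refine Finset.sum_congr rfl fun i _ => ?_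
          rw [← Finset.mul_sum, hkey i]
      _ = ∑ i, (aeval gens (f i * pderiv i F) + aeval gens (X i * pderiv i F)) := by
          refine Finset.sum_congr rfl fun i _ => ?_
          rw [map_mul (aeval (R := ℂ) gens), map_mul (aeval (R := ℂ) gens), aeval_X]
          ring
      _ = aeval gens (∑ i, f i * pderiv i F) + aeval gens (∑ i, X i * pderiv i F) := by
          rw [map_sum (aeval (R := ℂ) gens), map_sum (aeval (R := ℂ) gens),
            Finset.sum_add_distrib]
      _ = C (M : ℂ) * G := by
          rw [hFint, euler hFhom, map_zero, zero_add, map_mul (aeval (R := ℂ) gens),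
            aeval_C, hGdef, MvPolynomial.algebraMap_eq]
  -- identity 2: Euler-type identity in z coordinates
  have hId2 : pderiv i0 G + ∑ m, X m * pderiv m G = C (M : ℂ) * G := by
    calc pderiv i0 G + ∑ m, X m * pderiv m G
        = (∑ i, aeval gens (pderiv i F) * C (c i))
            + ∑ m, ∑ i, X m * (aeval gens (pderiv i F) * C (L' i m)) := by
          rw [pdG i0]
          congr 1
          · exact Finset.sum_congr rfl fun i _ => by rw [hcol i]
          · exact Finset.sum_congr rfl fun m _ => by rw [pdG m, Finset.mul_sum]
      _ = ∑ i, aeval gens (pderiv i F) * (C (c i) + ∑ m, C (L' i m) * X m) := by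
          rw [Finset.sum_comm, ← Finset.sum_add_distrib]
          refine Finset.sum_congr rfl fun i _ => ?_
          rw [mul_add, Finset.mul_sum]
          congr 1
          exact Finset.sum_congr rfl fun m _ => by ring
      _ = ∑ i, aeval gens (pderiv i F) * gens i := by
          refine Finset.sum_congr rfl fun i _ => ?_
          simp only [hgensdef]
      _ = ∑ i, aeval gens (X i * pderiv i F) := by
          refine Finset.sum_congr rfl fun i _ => ?_
          rw [map_mul (aeval (R := ℂ) gens), aeval_X]
          ring
      _ = C (M : ℂ) * G := by
          rw [← map_sum (aeval (R := ℂ) gens), euler hFhom, map_mul (aeval (R := ℂ) gens),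
            aeval_C, hGdef, MvPolynomial.algebraMap_eq]
  -- coefficient recursion from identity 2
  have hR : ∀ k : Fin n →₀ ℕ, ((k i0 : ℂ) + 1) * coeff (k + Finsupp.single i0 1) G
      + (∑ m, (k m : ℂ)) * coeff k G = (M : ℂ) * coeff k G := by
    intro k
    have h := congrArg (coeff k) hId2
    rw [coeff_add, MvPolynomial.coeff_sum, coeff_C_mul, coeff_pderiv'] at h
    rw [Finset.sum_congr rfl fun m (_ : m ∈ Finset.univ) => coeff_X_mul_pderiv m G k] at h
    rw [← Finset.sum_mul] at h
    exact h
  -- minimal-degree monomial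
  have hsupp : G.support.Nonempty := by
    rw [Finset.nonempty_iff_ne_empty]
    exact fun h => hGne (MvPolynomial.support_eq_empty.mp h)
  set S : Finset ℕ := G.support.image (fun k => ∑ m, k m) with hSdef
  have hSne : S.Nonempty := hsupp.image _
  set d : ℕ := S.min' hSne with hddef
  obtain ⟨k₀, hk₀supp, hk₀d⟩ := Finset.mem_image.mp (S.min'_mem hSne)
  have hk₀ : coeff k₀ G ≠ 0 := MvPolynomial.mem_support_iff.mp hk₀supp
  have hmin : ∀ k ∈ G.support, d ≤ ∑ m, k m :=
    fun k hk => Finset.min'_le _ _ (Finset.mem_image_of_mem _ hk)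
  -- resonance relation at k₀
  have hsumadd : ∀ (k : Fin n →₀ ℕ) (j : Fin n) (t : ℕ),
      (∑ m, (k + Finsupp.single j t) m) = (∑ m, k m) + t := by
    intro k j t
    simp only [Finsupp.add_apply, Finset.sum_add_distrib]
    congr 1
    simp [Finsupp.single_apply]
  have hres : (∑ m, (k₀ m : ℂ) * ρ m) = (M : ℂ) := by
    have h := congrArg (coeff k₀) hId1
    rw [MvPolynomial.coeff_sum, coeff_C_mul] at h
    have hsplit : ∀ m, coeff k₀ ((C (ρ m) * X m + q m) * pderiv m G)
        = ρ m * ((k₀ m : ℂ) * coeff k₀ G) := by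
      intro m
      rw [add_mul, coeff_add]
      have hq0 : coeff k₀ (q m * pderiv m G) = 0 := by
        rw [MvPolynomial.coeff_mul]
        refine Finset.sum_eq_zero fun x hx => ?_
        rw [Finset.HasAntidiagonal.mem_antidiagonal] at hx
        by_contra hne
        obtain ⟨h1, h2⟩ := mul_ne_zero_iff.mp hne
        have hdeg1 : (∑ m', x.1 m') = 2 := by
          rw [← ndeg_eq, Finsupp.degree_eq_weight_one]
          exact hqhom m h1
        have h2' : coeff (x.2 + Finsupp.single m 1) G ≠ 0 := by
          intro h0
          rw [coeff_pderiv', h0, mul_zero] at h2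
          exact h2 rfl
        have hd2 : d ≤ (∑ m', x.2 m') + 1 := by
          have hmm := hmin _ (MvPolynomial.mem_support_iff.mpr h2')
          rwa [hsumadd] at hmm
        have hsum2 : (∑ m', k₀ m') = (∑ m', x.1 m') + (∑ m', x.2 m') := by
          rw [← hx]
          simp [Finsupp.add_apply, Finset.sum_add_distrib]
        have hk₀d' : (∑ m', k₀ m') = d := hk₀d
        omega
      rw [hq0, add_zero, mul_assoc, coeff_C_mul, coeff_X_mul_pderiv]
    rw [Finset.sum_congr rfl fun m (_ : m ∈ Finset.univ) => hsplit m] at h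
    have h2 : (∑ m, (k₀ m : ℂ) * ρ m) * coeff k₀ G = (M : ℂ) * coeff k₀ G := by
      rw [Finset.sum_mul, ← h]
      exact Finset.sum_congr rfl fun m _ => by ring
    exact mul_right_cancel₀ hk₀ h2
  -- k₀ i0 = 0
  have hk₀i0 : k₀ i0 = 0 := by
    by_contra h0
    set k' : Fin n →₀ ℕ := k₀ - Finsupp.single i0 1 with hk'def
    have hle : Finsupp.single i0 1 ≤ k₀ := by
      rw [Finsupp.single_le_iff]
      omega
    have hk' : k' + Finsupp.single i0 1 = k₀ := tsub_add_cancel_of_le hle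
    have hsum' : (∑ m, k' m) + 1 = ∑ m, k₀ m := by
      rw [← hk', hsumadd]
    have hknot : coeff k' G = 0 := by
      by_contra hne
      have hmm := hmin _ (MvPolynomial.mem_support_iff.mpr hne)
      have hk₀d' : (∑ m', k₀ m') = d := hk₀d
      omega
    have h := hR k'
    rw [hk', hknot, mul_zero, mul_zero, add_zero] at h
    rcases mul_eq_zero.mp h with h1 | h1
    · exact Nat.cast_add_one_ne_zero _ h1
    · exact hk₀ h1
  -- d ≤ M
  have hdM : d ≤ M := by
    by_contra hlt
    push_neg at hlt
    have key : ∀ t : ℕ, coeff (k₀ + Finsupp.single i0 t) G ≠ 0 := by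
      intro t
      induction t with
      | zero => simpa using hk₀
      | succ t ih =>
        have h := hR (k₀ + Finsupp.single i0 t)
        have hsum : (∑ m, (k₀ + Finsupp.single i0 t) m) = d + t := by
          rw [hsumadd]
          have hk₀d' : (∑ m', k₀ m') = d := hk₀d
          omega
        have hcast : (∑ m, (((k₀ + Finsupp.single i0 t) m : ℕ) : ℂ)) = ((d + t : ℕ) : ℂ) := by
          rw [← Nat.cast_sum, hsum]
        rw [hcast] at h
        intro h0
        have heq : (k₀ + Finsupp.single i0 t) + Finsupp.single i0 1
            = k₀ + Finsupp.single i0 (t + 1) := by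
          rw [add_assoc, ← Finsupp.single_add]
        rw [heq, h0, mul_zero, zero_add] at h
        have hfac : ((M : ℂ) - ((d + t : ℕ) : ℂ)) * coeff (k₀ + Finsupp.single i0 t) G = 0 := by
          linear_combination -h
        rcases mul_eq_zero.mp hfac with h1 | h1
        · have : (M : ℂ) = ((d + t : ℕ) : ℂ) := by linear_combination h1
          have : M = d + t := Nat.cast_injective this
          omega
        · exact ih h1
    have hmem : ∀ t : ℕ, (k₀ + Finsupp.single i0 t) ∈ G.support :=
      fun t => MvPolynomial.mem_support_iff.mpr (key t)
    have hinj : Function.Injective (fun t : ℕ => k₀ + Finsupp.single i0 t) := by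
      intro t t' hEq
      have h := DFunLike.congr_fun hEq i0
      simp only [Finsupp.add_apply, Finsupp.single_eq_same] at h
      omega
    have hsub : (Finset.range (G.support.card + 1)).image
        (fun t => k₀ + Finsupp.single i0 t) ⊆ G.support := by
      intro x hx
      obtain ⟨t, _, rfl⟩ := Finset.mem_image.mp hx
      exact hmem t
    have hcard := Finset.card_le_card hsub
    rw [Finset.card_image_of_injective _ hinj, Finset.card_range] at hcard
    omega
  refine ⟨fun m => k₀ m, hk₀i0, hres, ?_⟩
  have hfin : (∑ m, k₀ m) ≤ M := le_trans (le_of_eq hk₀d) hdM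
  simpa using hfin

end TsyAux

open TsyAux

/-- Theorem 2 (Tsygvintsev): if a quadratic homogeneous system whose Kovalevskaya
matrix is diagonalizable with eigenvalues `ρ 0 = -1, ρ 1, …, ρ (n-1)` possesses a
nonzero homogeneous polynomial first integral of degree `M ≥ 1`, then `M` is a
nonnegative integer combination `k₂ρ₂ + ⋯ + kₙρₙ = M` with `k₂ + ⋯ + kₙ ≤ M`. -/
theorem degree_is_combination_of_kovalevskaya_exponents
    (n : ℕ) (a : Fin n → Fin n → Fin n → ℂ)
    (f : Fin n → MvPolynomial (Fin n) ℂ)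
    (hf : ∀ i, f i = ∑ j, ∑ k, C (a i j k) * X j * X k)
    (c : Fin n → ℂ) (hc : c ≠ 0)
    (hC : ∀ i, eval c (f i) + c i = 0)
    (K : Matrix (Fin n) (Fin n) ℂ)
    (hK : ∀ i j, K i j = eval c (pderiv j (f i)) + if i = j then 1 else 0)
    (ρ : Fin n → ℂ) (hρ0 : ∀ h : 0 < n, ρ ⟨0, h⟩ = -1)
    (L : Matrix (Fin n) (Fin n) ℂ) (hL : IsUnit L.det)
    (hdiag : K * L = L * Matrix.diagonal ρ)
    (M : ℕ) (hM : 1 ≤ M)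
    (F : MvPolynomial (Fin n) ℂ) (hF0 : F ≠ 0) (hFhom : F.IsHomogeneous M)
    (hFint : ∑ i, f i * pderiv i F = 0) :
    ∃ k : Fin n → ℕ, (∀ h : 0 < n, k ⟨0, h⟩ = 0) ∧
      (∑ i, (k i : ℂ) * ρ i) = (M : ℂ) ∧ (∑ i, k i) ≤ M := by
  rcases Nat.eq_zero_or_pos n with hn0 | hn
  · subst hn0
    exact absurd (Subsingleton.elim c 0) hc
  set i0 : Fin n := ⟨0, hn⟩ with hi0
  -- scalar evaluation of the quadratic forms
  have hev : ∀ i (u : Fin n → ℂ), eval u (f i) = ∑ j, ∑ k, a i j k * u j * u k := by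
    intro i u
    rw [hf]
    simp only [map_sum, eval_mul, eval_C, eval_X]
  have hpdf : ∀ i j', pderiv j' (f i)
      = (∑ k, C (a i j' k) * X k) + ∑ j, C (a i j j') * X j := by
    intro i j'
    rw [hf i]
    calc pderiv j' (∑ j, ∑ k, C (a i j k) * X j * X k)
        = ∑ j, ∑ k, (C (a i j k) * (pderiv j' (X j) * X k)
            + C (a i j k) * (X j * pderiv j' (X k))) := by
          rw [map_sum (pderiv j')]
          refine Finset.sum_congr rfl fun j _ => ?_
          rw [map_sum (pderiv j')]
          refine Finset.sum_congr rfl fun k _ => ?_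
          rw [mul_assoc, pderiv_C_mul, pderiv_mul, mul_add]
      _ = (∑ j, ∑ k, C (a i j k) * (pderiv j' (X j) * X k))
          + ∑ j, ∑ k, C (a i j k) * (X j * pderiv j' (X k)) := by
          rw [← Finset.sum_add_distrib]
          exact Finset.sum_congr rfl fun j _ => Finset.sum_add_distrib
      _ = (∑ k, C (a i j' k) * X k) + ∑ j, C (a i j j') * X j := by
          congr 1
          · rw [Finset.sum_eq_single j']
            · refine Finset.sum_congr rfl fun k _ => ?_
              rw [pderiv_X_self, one_mul]
            · intro j _ hj
              refine Finset.sum_eq_zero fun k _ => ?_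
              rw [pderiv_X_of_ne hj, zero_mul, mul_zero]
            · intro h
              exact absurd (Finset.mem_univ j') h
          · refine Finset.sum_congr rfl fun j _ => ?_
            rw [Finset.sum_eq_single j']
            · rw [pderiv_X_self, mul_one]
            · intro k _ hk
              rw [pderiv_X_of_ne hk, mul_zero, mul_zero]
            · intro h
              exact absurd (Finset.mem_univ j') h
  have hpd : ∀ i j' (u : Fin n → ℂ), eval u (pderiv j' (f i))
      = (∑ k, a i j' k * u k) + ∑ j, a i j j' * u j := by
    intro i j' u
    rw [hpdf]
    simp only [eval_add, map_sum, eval_mul, eval_C, eval_X]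
  have hfhom2 : ∀ i, (f i).IsHomogeneous 2 := by
    intro i
    rw [hf]
    refine MvPolynomial.IsHomogeneous.sum _ _ _ fun j _ =>
      MvPolynomial.IsHomogeneous.sum _ _ _ fun k _ => ?_
    simpa using ((isHomogeneous_C (Fin n) (a i j k)).mul
      (isHomogeneous_X ℂ j)).mul (isHomogeneous_X ℂ k)
  have hTaylor : ∀ i (u v : Fin n → ℂ), eval (fun p => u p + v p) (f i)
      = eval u (f i) + (∑ j, eval u (pderiv j (f i)) * v j) + eval v (f i) := by
    intro i u v
    rw [hev, hev, hev]
    have hmid : ∀ j, eval u (pderiv j (f i)) * v j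
        = (∑ k, a i j k * u k * v j) + ∑ p, a i p j * u p * v j := by
      intro j
      rw [hpd, add_mul, Finset.sum_mul, Finset.sum_mul]
    rw [Finset.sum_congr rfl fun j (_ : j ∈ Finset.univ) => hmid j, Finset.sum_add_distrib]
    have hexp : ∀ j k, a i j k * (u j + v j) * (u k + v k)
        = a i j k * u j * u k + (a i j k * u k * v j
          + (a i j k * u j * v k + a i j k * v j * v k)) := fun j k => by ring
    calc (∑ j, ∑ k, a i j k * (u j + v j) * (u k + v k))
        = ∑ j, ∑ k, (a i j k * u j * u k + (a i j k * u k * v j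
            + (a i j k * u j * v k + a i j k * v j * v k))) :=
          Finset.sum_congr rfl fun j _ => Finset.sum_congr rfl fun k _ => hexp j k
      _ = (∑ j, ∑ k, a i j k * u j * u k) + ((∑ j, ∑ k, a i j k * u k * v j)
            + ((∑ j, ∑ k, a i j k * u j * v k) + ∑ j, ∑ k, a i j k * v j * v k)) := by
          simp only [Finset.sum_add_distrib]
      _ = (∑ j, ∑ k, a i j k * u j * u k) + (((∑ j, ∑ k, a i j k * u k * v j)
            + ∑ j, ∑ p, a i p j * u p * v j) + ∑ j, ∑ k, a i j k * v j * v k) := by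
          have hB2 : (∑ j, ∑ k, a i j k * u j * v k) = ∑ j, ∑ p, a i p j * u p * v j :=
            Finset.sum_comm
          rw [hB2]
          abel
      _ = (∑ j, ∑ k, a i j k * u j * u k) + ((∑ j, ∑ k, a i j k * u k * v j)
            + ∑ j, ∑ p, a i p j * u p * v j) + ∑ j, ∑ k, a i j k * v j * v k := by
          abel
  -- the Kovalevskaya matrix sends c to -c
  have hKc : ∀ i, (∑ j, K i j * c j) = - c i := by
    intro i
    have h4 : eval (fun p => c p + c p) (f i) = 4 * eval c (f i) := by
      rw [hev, hev, Finset.mul_sum]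
      refine Finset.sum_congr rfl fun j _ => ?_
      rw [Finset.mul_sum]
      exact Finset.sum_congr rfl fun k _ => by ring
    have hT := hTaylor i c c
    rw [h4] at hT
    have hS : (∑ j, eval c (pderiv j (f i)) * c j) = 2 * eval c (f i) := by
      linear_combination -hT
    have hsplit : (∑ j, K i j * c j) = (∑ j, eval c (pderiv j (f i)) * c j)
        + ∑ j, (if i = j then (1:ℂ) else 0) * c j := by
      rw [← Finset.sum_add_distrib]
      exact Finset.sum_congr rfl fun j _ => by rw [hK i j, add_mul]
    have hite : (∑ j, (if i = j then (1:ℂ) else 0) * c j) = c i := by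
      rw [Finset.sum_congr rfl fun j (_ : j ∈ Finset.univ) =>
        (by rw [ite_mul, one_mul, zero_mul] :
          (if i = j then (1:ℂ) else 0) * c j = if i = j then c j else 0)]
      simp
    rw [hsplit, hS, hite]
    linear_combination 2 * hC i
  have hKcv : K.mulVec c = -c := by
    funext i
    have h := hKc i
    simpa [Matrix.mulVec, dotProduct] using h
  -- find an eigenvector index with eigenvalue -1 hit by c
  set α : Fin n → ℂ := L⁻¹.mulVec c with hαdef
  have hLinv1 : L * L⁻¹ = 1 := Matrix.mul_nonsing_inv _ hL
  have hLinv2 : L⁻¹ * L = 1 := Matrix.nonsing_inv_mul _ hL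
  have hLα : L.mulVec α = c := by
    rw [hαdef, Matrix.mulVec_mulVec, hLinv1, Matrix.one_mulVec]
  have hαne : α ≠ 0 := by
    intro h
    apply hc
    rw [← hLα, h, Matrix.mulVec_zero]
  obtain ⟨j0, hj0'⟩ := Function.ne_iff.mp hαne
  have hj0 : α j0 ≠ 0 := by simpa using hj0'
  have hdiagα : (Matrix.diagonal ρ).mulVec α = -α := by
    have h1 : L.mulVec ((Matrix.diagonal ρ).mulVec α) = L.mulVec (-α) := by
      rw [Matrix.mulVec_mulVec, ← hdiag, ← Matrix.mulVec_mulVec, hLα, hKcv,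
        Matrix.mulVec_neg, hLα]
    have h2 := congrArg (Matrix.mulVec L⁻¹) h1
    simp only [Matrix.mulVec_mulVec] at h2
    rw [← Matrix.mul_assoc, hLinv2, Matrix.one_mul, Matrix.one_mulVec] at h2
    exact h2
  have hρj0 : ρ j0 = -1 := by
    have h := congrFun hdiagα j0
    rw [Matrix.mulVec_diagonal] at h
    have h' : ρ j0 * α j0 = (-1) * α j0 := by
      rw [h]
      simp
    exact mul_right_cancel₀ hj0 h'
  -- permute columns so that the j0-th eigencolumn sits at position i0
  set σs : Equiv.Perm (Fin n) := Equiv.swap i0 j0 with hσdef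
  have hρσ : ∀ m, ρ (σs m) = ρ m := by
    intro m
    rcases eq_or_ne m i0 with rfl | hmi
    · rw [hσdef]
      rw [Equiv.swap_apply_left, hρj0, hρ0 hn]
    · rcases eq_or_ne m j0 with rfl | hmj
      · rw [hσdef]
        rw [Equiv.swap_apply_right, hρ0 hn, hρj0]
      · rw [hσdef, Equiv.swap_apply_of_ne_of_ne hmi hmj]
  set L₁ : Matrix (Fin n) (Fin n) ℂ := L.submatrix id σs with hL₁def
  have hL₁app : ∀ i j, L₁ i j = L i (σs j) := fun i j => rfl
  have hdiag₁ : K * L₁ = L₁ * Matrix.diagonal ρ := by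
    ext i j
    rw [Matrix.mul_diagonal]
    calc (K * L₁) i j = (K * L) i (σs j) := by
          rw [Matrix.mul_apply, Matrix.mul_apply]
          rfl
      _ = L i (σs j) * ρ (σs j) := by rw [hdiag, Matrix.mul_diagonal]
      _ = L₁ i j * ρ j := by rw [hρσ, hL₁app]
  have hL₁det : IsUnit L₁.det := by
    set P : Matrix (Fin n) (Fin n) ℂ := (1 : Matrix (Fin n) (Fin n) ℂ).submatrix id σs
      with hPdef
    have hPapp : ∀ i j, P i j = if i = σs j then 1 else 0 := by
      intro i j
      rw [hPdef, Matrix.submatrix_apply, Matrix.one_apply]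
      rfl
    have hP : L₁ = L * P := by
      ext i j
      rw [Matrix.mul_apply, Finset.sum_eq_single (σs j)]
      · rw [hPapp, if_pos rfl, mul_one, hL₁app]
      · intro m _ hm
        rw [hPapp, if_neg hm, mul_zero]
      · intro h
        exact absurd (Finset.mem_univ _) h
    have hσσ : ∀ x, σs (σs x) = x := fun x => Equiv.swap_apply_self i0 j0 x
    have hPP : P * P = 1 := by
      ext i j
      rw [Matrix.mul_apply, Finset.sum_eq_single (σs j)]
      · rw [hPapp (σs j) j, if_pos rfl, mul_one, hPapp i (σs j), hσσ]
        exact (Matrix.one_apply).symm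
      · intro m _ hm
        rw [hPapp m j, if_neg hm, mul_zero]
      · intro h
        exact absurd (Finset.mem_univ _) h
    have hPdet : IsUnit P.det := Matrix.isUnit_det_of_left_inverse hPP
    rw [hP, Matrix.det_mul]
    exact hL.mul hPdet
  -- the permuted eigenbasis hits c through its i0 coordinate
  set α₁ : Fin n → ℂ := fun m => α (σs m) with hα₁def
  have hLα₁ : L₁.mulVec α₁ = c := by
    funext i
    rw [← hLα]
    simp only [Matrix.mulVec, dotProduct]
    exact Fintype.sum_equiv σs _ _ fun m => rfl
  have hα₁i0 : α₁ i0 ≠ 0 := by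
    rw [hα₁def]
    simpa [hσdef, Equiv.swap_apply_left] using hj0
  -- replace the i0-th column by c itself
  set L' : Matrix (Fin n) (Fin n) ℂ := L₁.updateCol i0 c with hL'def
  have hcol : ∀ i, L' i i0 = c i := by
    intro i
    rw [hL'def, Matrix.updateCol_apply, if_pos rfl]
  have hL'col' : ∀ i j, j ≠ i0 → L' i j = L₁ i j := by
    intro i j hj
    rw [hL'def, Matrix.updateCol_apply, if_neg hj]
  have hdiag' : K * L' = L' * Matrix.diagonal ρ := by
    ext i j
    rw [Matrix.mul_diagonal]
    rcases eq_or_ne j i0 with rfl | hj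
    · rw [Matrix.mul_apply, hcol, hρ0 hn]
      rw [Finset.sum_congr rfl fun m (_ : m ∈ Finset.univ) => by rw [hcol m]]
      rw [hKc i]
      ring
    · rw [hL'col' i j hj, Matrix.mul_apply]
      rw [Finset.sum_congr rfl fun m (_ : m ∈ Finset.univ) => by rw [hL'col' m j hj]]
      have hKL₁ : (∑ m, K i m * L₁ m j) = (K * L₁) i j := (Matrix.mul_apply).symm
      rw [hKL₁, hdiag₁, Matrix.mul_diagonal]
  have hL'det : IsUnit L'.det := by
    set T : Matrix (Fin n) (Fin n) ℂ := (1 : Matrix (Fin n) (Fin n) ℂ).updateCol i0 α₁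
      with hTdef
    have hTapp : ∀ i j, T i j = if j = i0 then α₁ i else (1 : Matrix (Fin n) (Fin n) ℂ) i j := by
      intro i j
      rw [hTdef, Matrix.updateCol_apply]
    have hLT : L₁ * T = L' := by
      ext i j
      rcases eq_or_ne j i0 with rfl | hj
      · rw [Matrix.mul_apply, hcol]
        rw [Finset.sum_congr rfl fun m (_ : m ∈ Finset.univ) => by
          rw [hTapp m i0, if_pos rfl]]
        have h := congrFun hLα₁ i
        simpa [Matrix.mulVec, dotProduct] using h
      · rw [Matrix.mul_apply, hL'col' i j hj]
        rw [Finset.sum_congr rfl fun m (_ : m ∈ Finset.univ) => by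
          rw [hTapp m j, if_neg hj]]
        have h : (∑ m, L₁ i m * (1 : Matrix (Fin n) (Fin n) ℂ) m j)
            = (L₁ * (1 : Matrix (Fin n) (Fin n) ℂ)) i j := (Matrix.mul_apply).symm
        rw [h, mul_one]
    have hTtri : T.BlockTriangular OrderDual.toDual := by
      intro p r hpr
      have hpr' : p < r := hpr
      have hri0 : r ≠ i0 := by
        intro h
        rw [h] at hpr'
        have : p.val < 0 := hpr'
        omega
      rw [hTapp p r, if_neg hri0, Matrix.one_apply_ne (ne_of_lt hpr')]
    have hTdet : T.det = α₁ i0 := by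
      rw [Matrix.det_of_lowerTriangular T hTtri]
      rw [Finset.prod_eq_single i0]
      · rw [hTapp i0 i0, if_pos rfl]
      · intro p _ hp
        rw [hTapp p p, if_neg hp, Matrix.one_apply_eq]
      · intro h
        exact absurd (Finset.mem_univ i0) h
    have hTunit : IsUnit T.det := by
      rw [hTdet]
      exact (isUnit_iff_ne_zero).mpr hα₁i0
    rw [← hLT, Matrix.det_mul]
    exact hL₁det.mul hTunit
  obtain ⟨k, hk1, hk2, hk3⟩ := TsyAux.core hn f hfhom2 c hC K hK hTaylor ρ L' hL'det
    hdiag' hcol M hM F hF0 hFhom hFint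
  exact ⟨k, fun h => hk1, hk2, hk3⟩
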